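/- Let a, b ≥ 1 with n = a·b ≥ 2, and let ρ₀ be an n×n complex hermitian matrix indexed by Fin a × Fin b, with trace 1 and det(ρ₀^Γ) = 0. Then the following are equivalent: (a) tr(adjugate(ρ₀^Γ) · H^Γ) = 0 for every hermitian matrix H (indexed by Fin a × Fin b) with tr H = 0; (b) rank(ρ₀^Γ) ≤ n - 2 (equivalently, 0 is an eigenvalue of ρ₀^Γ of multiplicity at least two). -/

import Mathlib

/-- Partial transpose with respect to the second tensor factor:
`(ρ^Γ)_{(i,j),(k,l)} = ρ_{(i,l),(k,j)}`. -/
def partialTranspose {a b : ℕ} (ρ : Matrix (Fin a × Fin b) (Fin a × Fin b) ℂ) :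
    Matrix (Fin a × Fin b) (Fin a × Fin b) ℂ :=
  fun p q => ρ (p.1, q.2) (q.1, p.2)

open Matrix

namespace PTAux

lemma pt_pt {a b : ℕ} (ρ : Matrix (Fin a × Fin b) (Fin a × Fin b) ℂ) :
    partialTranspose (partialTranspose ρ) = ρ := rfl

lemma pt_conjTranspose {a b : ℕ} (ρ : Matrix (Fin a × Fin b) (Fin a × Fin b) ℂ) :
    (partialTranspose ρ)ᴴ = partialTranspose ρᴴ := rfl

lemma pt_herm {a b : ℕ} {ρ : Matrix (Fin a × Fin b) (Fin a × Fin b) ℂ}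
    (h : ρ.IsHermitian) : (partialTranspose ρ).IsHermitian := by
  unfold Matrix.IsHermitian
  rw [pt_conjTranspose, h.eq]

lemma pt_trace {a b : ℕ} (ρ : Matrix (Fin a × Fin b) (Fin a × Fin b) ℂ) :
    (partialTranspose ρ).trace = ρ.trace := rfl

variable {ι : Type*} [Fintype ι] [DecidableEq ι]

lemma trace_mul_std (A : Matrix ι ι ℂ) (i j : ι) (c : ℂ) :
    (A * Matrix.single i j c).trace = A j i * c := by
  unfold Matrix.trace
  rw [Finset.sum_eq_single j]
  · simp [Matrix.diag]
  · intro k _ hk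
    simp [Matrix.diag, hk]
  · simp

lemma std_conjTranspose (i j : ι) (c : ℂ) :
    (Matrix.single i j c)ᴴ = Matrix.single j i (star c) := by
  ext p q
  simp only [Matrix.conjTranspose_apply, Matrix.single, Matrix.of_apply,
    apply_ite (star : ℂ → ℂ), star_zero]
  by_cases h1 : i = q <;> by_cases h2 : j = p <;> simp [h1, h2]

lemma herm_pair (i j : ι) (c : ℂ) :
    (Matrix.single i j c + Matrix.single j i (star c)).IsHermitian := by
  unfold Matrix.IsHermitian
  rw [Matrix.conjTranspose_add, std_conjTranspose, std_conjTranspose, star_star, add_comm]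

lemma trace_std_ne {i j : ι} (h : i ≠ j) (c : ℂ) :
    (Matrix.single i j c).trace = 0 := by
  unfold Matrix.trace
  rw [Matrix.diag_single_of_ne i j c h]
  simp

lemma trace_std_same (i : ι) (c : ℂ) : (Matrix.single i i c).trace = c := by
  unfold Matrix.trace
  rw [Matrix.diag_single_same]
  simp

/-- If traces against all traceless hermitian matrices vanish and `M * A = 0` with
`trace M = 1`, then `A = 0`. -/
lemma eq_zero_of_trace_tests (A M : Matrix ι ι ℂ) (hcard : 2 ≤ Fintype.card ι)
    (hMA : M * A = 0) (htrM : M.trace = 1)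
    (h : ∀ K : Matrix ι ι ℂ, K.IsHermitian → K.trace = 0 → (A * K).trace = 0) :
    A = 0 := by
  have hnt : Nontrivial ι := Fintype.one_lt_card_iff_nontrivial.mp hcard
  -- off-diagonal entries vanish
  have hoff : ∀ i j : ι, i ≠ j → A i j = 0 := by
    intro i j hij
    have e1 : A j i * 1 + A i j * 1 = 0 := by
      have := h (Matrix.single i j (1 : ℂ) + Matrix.single j i (star 1))
        (herm_pair i j 1) (by rw [Matrix.trace_add, trace_std_ne hij, trace_std_ne (Ne.symm hij),
          add_zero])
      rwa [mul_add, Matrix.trace_add, trace_mul_std, trace_mul_std, star_one] at this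
    have e2 : A j i * Complex.I + A i j * (star Complex.I) = 0 := by
      have := h (Matrix.single i j Complex.I + Matrix.single j i (star Complex.I))
        (herm_pair i j Complex.I) (by rw [Matrix.trace_add, trace_std_ne hij,
          trace_std_ne (Ne.symm hij), add_zero])
      rwa [mul_add, Matrix.trace_add, trace_mul_std, trace_mul_std] at this
    rw [Complex.star_def, Complex.conj_I] at e2
    have e3 : (A j i - A i j) * Complex.I = 0 := by linear_combination e2
    have e4 : A j i = A i j := by
      rcases mul_eq_zero.mp e3 with h4 | h4
      · exact sub_eq_zero.mp h4
      · exact absurd h4 Complex.I_ne_zero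
    linear_combination e1 / 2 - e4 / 2
  -- diagonal entries are all equal
  obtain ⟨i₀⟩ := (inferInstance : Nonempty ι)
  have hdiag : ∀ i : ι, A i i = A i₀ i₀ := by
    intro i
    by_cases hi : i = i₀
    · rw [hi]
    · have hherm : (Matrix.single i i (1 : ℂ)
          - Matrix.single i₀ i₀ (1 : ℂ)).IsHermitian := by
        unfold Matrix.IsHermitian
        rw [Matrix.conjTranspose_sub, std_conjTranspose, std_conjTranspose, star_one]
      have := h _ hherm (by rw [Matrix.trace_sub, trace_std_same, trace_std_same, sub_self])
      rw [mul_sub, Matrix.trace_sub, trace_mul_std, trace_mul_std, mul_one, mul_one,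
        sub_eq_zero] at this
      exact this
  -- hence A is scalar
  have hA : A = (A i₀ i₀) • (1 : Matrix ι ι ℂ) := by
    ext i j
    by_cases hij : i = j
    · subst hij
      simp [hdiag i]
    · simp [hoff i j hij, Matrix.one_apply_ne hij]
  -- scalar must be zero since M * A = 0 and trace M = 1
  have hc : A i₀ i₀ = 0 := by
    have h0 : (A i₀ i₀) • M = 0 := by
      calc (A i₀ i₀) • M = M * ((A i₀ i₀) • (1 : Matrix ι ι ℂ)) := by
            rw [Matrix.mul_smul, Matrix.mul_one]
      _ = M * A := by rw [← hA]
      _ = 0 := hMA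
    have := congrArg Matrix.trace h0
    rwa [Matrix.trace_smul, htrM, smul_eq_mul, mul_one, Matrix.trace_zero] at this
  rw [hA, hc, zero_smul]

/-- For a hermitian complex matrix, the adjugate vanishes iff the rank is at most `n - 2`. -/
lemma herm_adjugate_eq_zero_iff_rank (M : Matrix ι ι ℂ) (hM : M.IsHermitian)
    (hcard : 2 ≤ Fintype.card ι) :
    M.adjugate = 0 ↔ M.rank ≤ Fintype.card ι - 2 := by
  classical
  set e := hM.eigenvalues with he
  set U : Matrix ι ι ℂ := (hM.eigenvectorUnitary : Matrix ι ι ℂ) with hU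
  set D : Matrix ι ι ℂ := Matrix.diagonal (RCLike.ofReal ∘ e) with hD
  have hspec : M = U * D * star U := hM.spectral_theorem
  have hdiag : star U * M * U = D := by
    have := hM.conjStarAlgAut_star_eigenvectorUnitary
    rwa [Unitary.conjStarAlgAut_star_apply] at this
  have key : M.adjugate = 0 ↔ D.adjugate = 0 := by
    constructor
    · intro h
      rw [← hdiag, Matrix.adjugate_mul_distrib, Matrix.adjugate_mul_distrib, h,
        Matrix.zero_mul, Matrix.mul_zero]
    · intro h
      rw [hspec, Matrix.adjugate_mul_distrib, Matrix.adjugate_mul_distrib, h,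
        Matrix.zero_mul, Matrix.mul_zero]
  have hadjD : D.adjugate = Matrix.diagonal
      (fun i => ∏ j ∈ Finset.univ.erase i, ((e j : ℂ))) := by
    rw [hD, Matrix.adjugate_diagonal]
    rfl
  have hdz : D.adjugate = 0 ↔ ∀ i : ι, ∃ j, j ≠ i ∧ e j = 0 := by
    rw [hadjD]
    constructor
    · intro h i
      have hi : (∏ j ∈ Finset.univ.erase i, ((e j : ℂ))) = 0 := by
        have := congrFun (congrFun h i) i
        simpa using this
      obtain ⟨j, hj, hj0⟩ := Finset.prod_eq_zero_iff.mp hi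
      exact ⟨j, (Finset.mem_erase.mp hj).1, by exact_mod_cast hj0⟩
    · intro h
      ext p q
      by_cases hpq : p = q
      · subst hpq
        obtain ⟨j, hj, hj0⟩ := h p
        simp only [Matrix.diagonal_apply_eq, Matrix.zero_apply]
        exact Finset.prod_eq_zero (Finset.mem_erase.mpr ⟨hj, Finset.mem_univ j⟩)
          (by exact_mod_cast hj0)
      · simp [Matrix.diagonal_apply_ne _ hpq]
  set Z := Finset.univ.filter (fun i => e i = 0) with hZ
  have hZcard : Z.card ≤ Fintype.card ι := by
    simpa using (Finset.card_filter_le Finset.univ (fun i => e i = 0))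
  have hZiff : (∀ i : ι, ∃ j, j ≠ i ∧ e j = 0) ↔ 2 ≤ Z.card := by
    constructor
    · intro h
      have hne : Nonempty ι := Fintype.card_pos_iff.mp (by omega)
      obtain ⟨i₀⟩ := hne
      obtain ⟨j, hj, hj0⟩ := h i₀
      obtain ⟨k, hk, hk0⟩ := h j
      refine Finset.one_lt_card.mpr ⟨j, ?_, k, ?_, fun hjk => hk (hjk ▸ rfl)⟩
      · simp [hZ, hj0]
      · simp [hZ, hk0]
    · intro h i
      obtain ⟨x, hx, y, hy, hxy⟩ := Finset.one_lt_card.mp h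
      have hx0 : e x = 0 := (Finset.mem_filter.mp hx).2
      have hy0 : e y = 0 := (Finset.mem_filter.mp hy).2
      by_cases hxi : x = i
      · exact ⟨y, fun hyi => hxy (by rw [hxi, hyi]), hy0⟩
      · exact ⟨x, hxi, hx0⟩
  have hrank : M.rank = Fintype.card ι - Z.card := by
    rw [hM.rank_eq_card_non_zero_eigs, Fintype.card_subtype]
    have h1 : Finset.univ.filter (fun i => e i ≠ 0) = Finset.univ \ Z := by
      ext x
      simp [hZ]
    rw [h1, Finset.card_sdiff_of_subset (Finset.subset_univ Z), Finset.card_univ]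
  rw [key, hdz, hZiff, hrank]
  omega

end PTAux

/-- For `a, b ≥ 1` with `n = a·b ≥ 2` and an hermitian `ρ₀` (indexed by
`Fin a × Fin b`) with trace 1 and `det ρ₀^Γ = 0`, the gradient of `ρ ↦ det ρ^Γ` restricted to
the affine space of trace-1 hermitian matrices vanishes at `ρ₀` (i.e.
`tr(adjugate(ρ₀^Γ) · H^Γ) = 0` for all traceless hermitian `H`) iff `rank ρ₀^Γ ≤ n - 2`. -/
theorem singular_point_of_partialTranspose_iff_rank_le
    (a b : ℕ) (ha : 1 ≤ a) (hb : 1 ≤ b) (hn : 2 ≤ a * b)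
    (ρ₀ : Matrix (Fin a × Fin b) (Fin a × Fin b) ℂ)
    (hherm : ρ₀.IsHermitian) (htr : ρ₀.trace = 1)
    (hdet : (partialTranspose ρ₀).det = 0) :
    (∀ H : Matrix (Fin a × Fin b) (Fin a × Fin b) ℂ, H.IsHermitian → H.trace = 0 →
        ((partialTranspose ρ₀).adjugate * partialTranspose H).trace = 0)
      ↔ (partialTranspose ρ₀).rank ≤ a * b - 2 := by
  set M := partialTranspose ρ₀ with hM
  have hMherm : M.IsHermitian := PTAux.pt_herm hherm
  have hcard : Fintype.card (Fin a × Fin b) = a * b := by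
    simp [Fintype.card_prod]
  have hcard2 : 2 ≤ Fintype.card (Fin a × Fin b) := by rw [hcard]; exact hn
  have hiff := PTAux.herm_adjugate_eq_zero_iff_rank M hMherm hcard2
  rw [hcard] at hiff
  constructor
  · intro h
    rw [← hiff]
    apply PTAux.eq_zero_of_trace_tests M.adjugate M hcard2
    · rw [Matrix.mul_adjugate, hdet, zero_smul]
    · rw [hM, PTAux.pt_trace, htr]
    · intro K hK htK
      have := h (partialTranspose K) (PTAux.pt_herm hK)
        (by rw [PTAux.pt_trace]; exact htK)
      rwa [PTAux.pt_pt] at this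
  · intro hrank H _ _
    rw [hiff.mpr hrank, Matrix.zero_mul, Matrix.trace_zero]
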